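/- Define h∧(y) := (M_{0,w}^ε(|y|_+^2))^{1/2} − (M_{p,w}^ε(|y|_-^2))^{1/2} and h∨(y) := −h∧(−y). Then h∨(y) > 0 if and only if max_i y_i > 0, and h∨(y) < 0 if and only if max_i y_i < 0. -/
import Mathlib


open Finset Real Filter Topology

noncomputable def M0 {n : ℕ} (ε : ℝ) (w : Fin n → ℕ) (z : Fin n → ℝ) : ℝ :=
  (ε ^ (∑ i, w i) + ∏ i, z i ^ w i) ^ ((1 : ℝ) / (∑ i, w i))

noncomputable def Mp {n : ℕ} (ε : ℝ) (p : ℕ) (w : Fin n → ℕ) (z : Fin n → ℝ) : ℝ :=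
  (ε ^ p + (1 / (∑ i, (w i : ℝ))) * ∑ i, (w i : ℝ) * z i ^ p) ^ ((1 : ℝ) / p)

noncomputable def posSq {n : ℕ} (y : Fin n → ℝ) : Fin n → ℝ := fun i => max (y i) 0 ^ 2

noncomputable def negSq {n : ℕ} (y : Fin n → ℝ) : Fin n → ℝ := fun i => min (y i) 0 ^ 2

noncomputable def hConj {n : ℕ} (ε : ℝ) (p : ℕ) (w : Fin n → ℕ) (y : Fin n → ℝ) : ℝ :=
  M0 ε w (posSq y) ^ ((1 : ℝ) / 2) - Mp ε p w (negSq y) ^ ((1 : ℝ) / 2)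

noncomputable def hDisj {n : ℕ} (ε : ℝ) (p : ℕ) (w : Fin n → ℕ) (y : Fin n → ℝ) : ℝ :=
  - hConj ε p w (fun i => - y i)

lemma pow_rpow_inv_aux (x : ℝ) (hx : 0 ≤ x) (k : ℕ) (hk : 0 < k) :
    (x ^ k) ^ ((1 : ℝ) / k) = x := by
  rw [← Real.rpow_natCast x k, ← Real.rpow_mul hx, mul_one_div,
    div_self (by exact_mod_cast hk.ne'), Real.rpow_one]

lemma posSq_neg {n : ℕ} (y : Fin n → ℝ) : posSq (fun i => - y i) = negSq y := by
  funext i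
  simp only [posSq, negSq]
  rcases le_total (y i) 0 with h | h
  · rw [max_eq_left (by linarith), min_eq_left h]; ring
  · rw [max_eq_right (by linarith), min_eq_right h]

lemma negSq_neg {n : ℕ} (y : Fin n → ℝ) : negSq (fun i => - y i) = posSq y := by
  funext i
  simp only [posSq, negSq]
  rcases le_total (y i) 0 with h | h
  · rw [min_eq_right (by linarith), max_eq_right h]
  · rw [min_eq_left (by linarith), max_eq_left h]; ring

lemma hDisj_eq {n : ℕ} (ε : ℝ) (p : ℕ) (w : Fin n → ℕ) (y : Fin n → ℝ) :
    hDisj ε p w y =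
      Mp ε p w (posSq y) ^ ((1 : ℝ) / 2) - M0 ε w (negSq y) ^ ((1 : ℝ) / 2) := by
  unfold hDisj hConj
  rw [posSq_neg, negSq_neg]; ring

lemma Mp_eq_of_nonpos {n : ℕ} (ε : ℝ) (hε : 0 < ε) (p : ℕ) (hp : 0 < p)
    (w : Fin n → ℕ) (y : Fin n → ℝ) (h : ∀ i, y i ≤ 0) :
    Mp ε p w (posSq y) = ε := by
  unfold Mp posSq
  have : ∀ i : Fin n, (w i : ℝ) * (max (y i) 0 ^ 2) ^ p = 0 := by
    intro i
    rw [max_eq_right (h i)]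
    simp [zero_pow hp.ne']
  rw [Finset.sum_congr rfl (fun i _ => this i)]
  simp only [Finset.sum_const_zero, mul_zero, add_zero]
  exact pow_rpow_inv_aux ε hε.le p hp

lemma Mp_gt_of_pos {n : ℕ} (ε : ℝ) (hε : 0 < ε) (p : ℕ) (hp : 0 < p)
    (w : Fin n → ℕ) (hw : ∀ i, 0 < w i) (y : Fin n → ℝ) (i0 : Fin n) (h : 0 < y i0) :
    ε < Mp ε p w (posSq y) := by
  unfold Mp posSq
  have hSpos : (0 : ℝ) < ∑ i, (w i : ℝ) := by
    apply Finset.sum_pos (fun i _ => by exact_mod_cast hw i) ⟨i0, Finset.mem_univ i0⟩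
  have hsum : 0 < ∑ i, (w i : ℝ) * (max (y i) 0 ^ 2) ^ p := by
    apply Finset.sum_pos'
    · intro i _
      positivity
    · refine ⟨i0, Finset.mem_univ i0, ?_⟩
      rw [max_eq_left h.le]
      have : (0:ℝ) < w i0 := by exact_mod_cast hw i0
      positivity
  have hlt : ε ^ p < ε ^ p + (1 / ∑ i, (w i : ℝ)) * ∑ i, (w i : ℝ) * (max (y i) 0 ^ 2) ^ p := by
    have : 0 < (1 / ∑ i, (w i : ℝ)) * ∑ i, (w i : ℝ) * (max (y i) 0 ^ 2) ^ p := by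
      positivity
    linarith
  calc ε = (ε ^ p) ^ ((1:ℝ)/p) := (pow_rpow_inv_aux ε hε.le p hp).symm
    _ < _ := Real.rpow_lt_rpow (by positivity) hlt (by positivity)

lemma M0_eq_of_exists_nonneg {n : ℕ} (ε : ℝ) (hε : 0 < ε)
    (w : Fin n → ℕ) (hw : ∀ i, 0 < w i) (y : Fin n → ℝ) (i0 : Fin n) (h : 0 ≤ y i0) :
    M0 ε w (negSq y) = ε := by
  unfold M0 negSq
  have hprod : (∏ i, (min (y i) 0 ^ 2) ^ w i) = 0 := by
    apply Finset.prod_eq_zero (Finset.mem_univ i0)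
    rw [min_eq_right h]
    simp [zero_pow (hw i0).ne']
  have hS : 0 < ∑ i, w i :=
    Finset.sum_pos (fun i _ => hw i) ⟨i0, Finset.mem_univ i0⟩
  rw [hprod, add_zero, pow_rpow_inv_aux ε hε.le _ hS]

lemma M0_gt_of_forall_neg {n : ℕ} (ε : ℝ) (hε : 0 < ε)
    (w : Fin n → ℕ) (hw : ∀ i, 0 < w i) (y : Fin n → ℝ) (hne : Nonempty (Fin n))
    (h : ∀ i, y i < 0) :
    ε < M0 ε w (negSq y) := by
  obtain ⟨i0⟩ := hne
  unfold M0 negSq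
  have hS : 0 < ∑ i, w i :=
    Finset.sum_pos (fun i _ => hw i) ⟨i0, Finset.mem_univ i0⟩
  have hprod : 0 < ∏ i, (min (y i) 0 ^ 2) ^ w i := by
    apply Finset.prod_pos
    intro i _
    rw [min_eq_left (h i).le]
    have hne : y i ≠ 0 := (h i).ne
    positivity
  calc ε = (ε ^ (∑ i, w i)) ^ ((1:ℝ)/(∑ i, w i)) := (pow_rpow_inv_aux ε hε.le _ hS).symm
    _ < _ := Real.rpow_lt_rpow (by positivity) (by linarith)
      (by have : (0:ℝ) < ((∑ i, w i : ℕ) : ℝ) := by exact_mod_cast hS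
          positivity)

theorem hDisj_sign_iff_max_sign {n : ℕ} (hn : 0 < n) (ε : ℝ) (hε : 0 < ε)
    (p : ℕ) (hp : 0 < p) (w : Fin n → ℕ) (hw : ∀ i, 0 < w i) (y : Fin n → ℝ) :
    (0 < hDisj ε p w y ↔
      0 < Finset.univ.sup' (Finset.univ_nonempty_iff.mpr ⟨⟨0, hn⟩⟩) y) ∧
    (hDisj ε p w y < 0 ↔
      Finset.univ.sup' (Finset.univ_nonempty_iff.mpr ⟨⟨0, hn⟩⟩) y < 0) := by
  have hne : Nonempty (Fin n) := ⟨⟨0, hn⟩⟩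
  rw [hDisj_eq]
  have hsup_pos : (0 < Finset.univ.sup' (Finset.univ_nonempty_iff.mpr ⟨⟨0, hn⟩⟩) y)
      ↔ ∃ i, 0 < y i := by
    rw [Finset.lt_sup'_iff]; simp
  have hsup_neg : (Finset.univ.sup' (Finset.univ_nonempty_iff.mpr ⟨⟨0, hn⟩⟩) y < 0)
      ↔ ∀ i, y i < 0 := by
    rw [Finset.sup'_lt_iff]; simp
  rw [hsup_pos, hsup_neg]
  by_cases hA : ∃ i, 0 < y i
  · obtain ⟨i0, hi0⟩ := hA
    have h1 : M0 ε w (negSq y) = ε := M0_eq_of_exists_nonneg ε hε w hw y i0 hi0.le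
    have h2 : ε < Mp ε p w (posSq y) := Mp_gt_of_pos ε hε p hp w hw y i0 hi0
    have h3 : ε ^ ((1:ℝ)/2) < Mp ε p w (posSq y) ^ ((1:ℝ)/2) :=
      Real.rpow_lt_rpow hε.le h2 (by norm_num)
    constructor
    · constructor
      · intro _; exact ⟨i0, hi0⟩
      · intro _; rw [h1]; linarith
    · constructor
      · intro hlt; rw [h1] at hlt; linarith
      · intro hall; exact absurd (hall i0) (by linarith)
  · push_neg at hA
    by_cases hB : ∀ i, y i < 0
    · have h1 : Mp ε p w (posSq y) = ε := Mp_eq_of_nonpos ε hε p hp w y hA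
      have h2 : ε < M0 ε w (negSq y) := M0_gt_of_forall_neg ε hε w hw y hne hB
      have h3 : ε ^ ((1:ℝ)/2) < M0 ε w (negSq y) ^ ((1:ℝ)/2) :=
        Real.rpow_lt_rpow hε.le h2 (by norm_num)
      constructor
      · constructor
        · intro hlt; rw [h1] at hlt; linarith
        · rintro ⟨i, hi⟩; exact absurd hi (not_lt.mpr (hA i))
      · constructor
        · intro _; exact hB
        · intro _; rw [h1]; linarith
    · push_neg at hB
      obtain ⟨i0, hi0⟩ := hB
      have h1 : Mp ε p w (posSq y) = ε := Mp_eq_of_nonpos ε hε p hp w y hA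
      have h2 : M0 ε w (negSq y) = ε := M0_eq_of_exists_nonneg ε hε w hw y i0 hi0
      rw [h1, h2]
      constructor
      · constructor
        · intro hlt; linarith
        · rintro ⟨i, hi⟩; exact absurd hi (not_lt.mpr (hA i))
      · constructor
        · intro hlt; linarith
        · intro hall; exact absurd (hall i0) (not_lt.mpr hi0)
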